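/- Let Π_η (η = 1/m, m > 2) be the projection Π_η f = Σ_i f(a_i) φ_i + (∫f dm − Σ_i f(a_i)∫φ_i dm) κ, where κ = 2 Σ_{j=0}^{m-1} φ̃_{2j+1} is built from the partition of unity of mesh 1/(2m), so that κ(a_i)=0, ∫κ = 1, ‖κ‖_∞ = 2, ‖κ'‖_∞ = 3m. Then for f ∈ C^1([0,1]): (1) ‖Π_η f‖_∞ ≤ 5‖f‖_∞; (2) ‖Π_η f‖_∞ ≤ ‖f‖_∞ + 2‖f'‖_∞/m; (3) ‖Π_η f‖_{C^1} ≤ (11/2)‖f‖_{C^1}; (4) ‖Π_η f − f‖_∞ ≤ 3‖f'‖_∞/m. Moreover ∫ Π_η f dm = ∫ f dm. -/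

import Mathlib

open Set

noncomputable def bFun (x : ℝ) : ℝ :=
  if x < -1 then 0
  else if x ≤ 0 then 1 - 3 * x ^ 2 - 2 * x ^ 3
  else if x ≤ 1 then 1 - 3 * x ^ 2 + 2 * x ^ 3
  else 0

noncomputable def bD (x : ℝ) : ℝ :=
  if x < -1 then 0
  else if x ≤ 0 then -6 * x - 6 * x ^ 2
  else if x ≤ 1 then -6 * x + 6 * x ^ 2
  else 0

noncomputable def bI (x : ℝ) : ℝ :=
  if x < -1 then 0
  else if x ≤ 0 then x - x ^ 3 - x ^ 4 / 2 + 1 / 2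
  else if x ≤ 1 then x - x ^ 3 + x ^ 4 / 2 + 1 / 2
  else 1

lemma bFun_zero {x : ℝ} (h : 1 ≤ |x|) : bFun x = 0 := by
  rcases le_abs.mp h with h1 | h1
  · unfold bFun
    split_ifs with a b c <;> nlinarith
  · unfold bFun
    split_ifs with a b c <;> nlinarith

lemma bD_zero {x : ℝ} (h : 1 ≤ |x|) : bD x = 0 := by
  rcases le_abs.mp h with h1 | h1
  · unfold bD
    split_ifs with a b c <;> nlinarith
  · unfold bD
    split_ifs with a b c <;> nlinarith

lemma bFun_nonneg (x : ℝ) : 0 ≤ bFun x := by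
  unfold bFun; split_ifs with a b c <;>
    nlinarith [sq_nonneg (x+1), sq_nonneg (x-1), sq_nonneg (2*x+1), sq_nonneg (2*x-1), sq_nonneg x]

lemma bFun_le_one (x : ℝ) : bFun x ≤ 1 := by
  unfold bFun; split_ifs with a b c <;> nlinarith

lemma bD_abs_le (x : ℝ) : |bD x| ≤ 3 / 2 := by
  rw [abs_le]; unfold bD
  constructor <;> split_ifs with a b c <;>
    nlinarith [sq_nonneg (x+1), sq_nonneg (x-1), sq_nonneg (2*x+1), sq_nonneg (2*x-1), sq_nonneg x]

lemma bFun_pair {t : ℝ} (h0 : 0 ≤ t) (h1 : t ≤ 1) : bFun t + bFun (t - 1) = 1 := by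
  unfold bFun; split_ifs <;> nlinarith

lemma bD_pair {t : ℝ} (h0 : 0 ≤ t) (h1 : t ≤ 1) : bD t + bD (t - 1) = 0 := by
  unfold bD; split_ifs <;> nlinarith

lemma glue_deriv {F p q : ℝ → ℝ} {a c b d : ℝ} (hac : a < c) (hcb : c < b)
    (h₁ : ∀ x ∈ Icc a c, F x = p x) (h₂ : ∀ x ∈ Icc c b, F x = q x)
    (hp : HasDerivAt p d c) (hq : HasDerivAt q d c) : HasDerivAt F d c := by
  have H₁ : HasDerivWithinAt F d (Icc a c) c :=
    hp.hasDerivWithinAt.congr h₁ (h₁ c ⟨hac.le, le_rfl⟩)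
  have H₂ : HasDerivWithinAt F d (Icc c b) c :=
    hq.hasDerivWithinAt.congr h₂ (h₂ c ⟨le_rfl, hcb.le⟩)
  have H := H₁.union H₂
  rw [Icc_union_Icc_eq_Icc hac.le hcb.le] at H
  exact H.hasDerivAt (Icc_mem_nhds hac hcb)

lemma deriv_of_eqOn {F p : ℝ → ℝ} {a b x d : ℝ} (hx : x ∈ Ioo a b)
    (h : ∀ y ∈ Ioo a b, F y = p y) (hp : HasDerivAt p d x) : HasDerivAt F d x :=
  hp.congr_of_eventuallyEq (Filter.eventually_of_mem (Ioo_mem_nhds hx.1 hx.2) h)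

lemma hd_p1 (x : ℝ) : HasDerivAt (fun y : ℝ => 1 - 3 * y ^ 2 - 2 * y ^ 3) (-6 * x - 6 * x ^ 2) x := by
  have h := ((hasDerivAt_pow 2 x).const_mul (3:ℝ))
  have h' := ((hasDerivAt_pow 3 x).const_mul (2:ℝ))
  have := ((hasDerivAt_const x (1:ℝ)).sub h).sub h'
  exact this.congr_deriv (by push_cast; ring)

lemma hd_p2 (x : ℝ) : HasDerivAt (fun y : ℝ => 1 - 3 * y ^ 2 + 2 * y ^ 3) (-6 * x + 6 * x ^ 2) x := by
  have h := ((hasDerivAt_pow 2 x).const_mul (3:ℝ))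
  have h' := ((hasDerivAt_pow 3 x).const_mul (2:ℝ))
  have := ((hasDerivAt_const x (1:ℝ)).sub h).add h'
  exact this.congr_deriv (by push_cast; ring)

lemma hd_q1 (x : ℝ) : HasDerivAt (fun y : ℝ => y - y ^ 3 - y ^ 4 / 2 + 1 / 2)
    (1 - 3 * x ^ 2 - 2 * x ^ 3) x := by
  have h := (hasDerivAt_pow 3 x)
  have h' := ((hasDerivAt_pow 4 x).div_const (2:ℝ))
  have := (((hasDerivAt_id x).sub h).sub h').add_const (1/2 : ℝ)
  exact this.congr_deriv (by push_cast; ring)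

lemma hd_q2 (x : ℝ) : HasDerivAt (fun y : ℝ => y - y ^ 3 + y ^ 4 / 2 + 1 / 2)
    (1 - 3 * x ^ 2 + 2 * x ^ 3) x := by
  have h := (hasDerivAt_pow 3 x)
  have h' := ((hasDerivAt_pow 4 x).div_const (2:ℝ))
  have := (((hasDerivAt_id x).sub h).add h').add_const (1/2 : ℝ)
  exact this.congr_deriv (by push_cast; ring)

lemma bFun_eq1 : ∀ y ∈ Icc (-1:ℝ) 0, bFun y = 1 - 3 * y ^ 2 - 2 * y ^ 3 := by
  intro y hy; unfold bFun; rw [if_neg (by linarith [hy.1]), if_pos hy.2]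

lemma bFun_eq2 : ∀ y ∈ Icc (0:ℝ) 1, bFun y = 1 - 3 * y ^ 2 + 2 * y ^ 3 := by
  intro y hy
  unfold bFun
  rcases eq_or_lt_of_le hy.1 with h | h
  · rw [if_neg (by linarith), if_pos (by linarith)]; nlinarith
  · rw [if_neg (by linarith), if_neg (by linarith), if_pos hy.2]

lemma bFun_eqL : ∀ y ∈ Icc (-2:ℝ) (-1), bFun y = 0 := fun y hy =>
  bFun_zero (le_abs.mpr (Or.inr (by linarith [hy.2])))

lemma bFun_eqR : ∀ y ∈ Icc (1:ℝ) 2, bFun y = 0 := fun y hy =>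
  bFun_zero (le_abs.mpr (Or.inl hy.1))

lemma hasDerivAt_bFun (x : ℝ) : HasDerivAt bFun (bD x) x := by
  rcases lt_trichotomy x (-1) with h | h | h
  · have hb : bD x = 0 := by unfold bD; rw [if_pos h]
    rw [hb]
    exact deriv_of_eqOn (a := x - 1) (b := -1) ⟨by linarith, h⟩
      (fun y hy => bFun_zero (le_abs.mpr (Or.inr (by linarith [hy.2]))))
      (hasDerivAt_const _ 0)
  · subst h
    have hb : bD (-1) = 0 := by unfold bD; norm_num
    rw [hb]
    refine glue_deriv (by norm_num : (-2:ℝ) < -1) (by norm_num : (-1:ℝ) < 0)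
      bFun_eqL bFun_eq1 (hasDerivAt_const _ 0) ?_
    have := hd_p1 (-1)
    convert this using 1; norm_num
  rcases lt_trichotomy x 0 with h0 | h0 | h0
  · have hb : bD x = -6 * x - 6 * x ^ 2 := by
      unfold bD; rw [if_neg (by linarith), if_pos h0.le]
    rw [hb]
    exact deriv_of_eqOn ⟨h, h0⟩ (fun y hy => bFun_eq1 y ⟨hy.1.le, hy.2.le⟩) (hd_p1 x)
  · subst h0
    have hb : bD 0 = 0 := by unfold bD; norm_num
    rw [hb]
    refine glue_deriv (by norm_num : (-1:ℝ) < 0) (by norm_num : (0:ℝ) < 1)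
      bFun_eq1 bFun_eq2 ?_ ?_
    · have := hd_p1 0; convert this using 1; norm_num
    · have := hd_p2 0; convert this using 1; norm_num
  rcases lt_trichotomy x 1 with h1 | h1 | h1
  · have hb : bD x = -6 * x + 6 * x ^ 2 := by
      unfold bD; rw [if_neg (by linarith), if_neg (by linarith), if_pos h1.le]
    rw [hb]
    exact deriv_of_eqOn ⟨h0, h1⟩ (fun y hy => bFun_eq2 y ⟨hy.1.le, hy.2.le⟩) (hd_p2 x)
  · subst h1
    have hb : bD 1 = 0 := by unfold bD; norm_num
    rw [hb]
    refine glue_deriv (by norm_num : (0:ℝ) < 1) (by norm_num : (1:ℝ) < 2)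
      bFun_eq2 bFun_eqR ?_ (hasDerivAt_const _ 0)
    have := hd_p2 1; convert this using 1; norm_num
  · have hb : bD x = 0 := by
      unfold bD; rw [if_neg (by linarith), if_neg (by linarith), if_neg (by linarith)]
    rw [hb]
    exact deriv_of_eqOn (a := 1) (b := x + 1) ⟨h1, by linarith⟩
      (fun y hy => bFun_zero (le_abs.mpr (Or.inl hy.1.le)))
      (hasDerivAt_const _ 0)

lemma bFun_cont : Continuous bFun :=
  continuous_iff_continuousAt.mpr fun x => (hasDerivAt_bFun x).continuousAt

lemma bI_eq1 : ∀ y ∈ Icc (-1:ℝ) 0, bI y = y - y ^ 3 - y ^ 4 / 2 + 1 / 2 := by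
  intro y hy; unfold bI; rw [if_neg (by linarith [hy.1]), if_pos hy.2]

lemma bI_eq2 : ∀ y ∈ Icc (0:ℝ) 1, bI y = y - y ^ 3 + y ^ 4 / 2 + 1 / 2 := by
  intro y hy
  unfold bI
  rcases eq_or_lt_of_le hy.1 with h | h
  · rw [if_neg (by linarith), if_pos (by linarith)]; rw [← h]; norm_num
  · rw [if_neg (by linarith), if_neg (by linarith), if_pos hy.2]

lemma hasDerivAt_bI (x : ℝ) : HasDerivAt bI (bFun x) x := by
  rcases lt_trichotomy x (-1) with h | h | h
  · have hb : bFun x = 0 := bFun_zero (le_abs.mpr (Or.inr (by linarith)))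
    rw [hb]
    exact deriv_of_eqOn (a := x - 1) (b := -1) ⟨by linarith, h⟩
      (fun y hy => by unfold bI; rw [if_pos hy.2]) (hasDerivAt_const _ 0)
  · subst h
    have hb : bFun (-1) = 0 := bFun_zero (by norm_num)
    rw [hb]
    refine glue_deriv (by norm_num : (-2:ℝ) < -1) (by norm_num : (-1:ℝ) < 0)
      (fun y hy => by
        unfold bI
        rcases lt_or_eq_of_le hy.2 with h | h
        · rw [if_pos h]
        · subst h; norm_num) bI_eq1
      (hasDerivAt_const _ 0) ?_
    · have := hd_q1 (-1); convert this using 1; norm_num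
  rcases lt_trichotomy x 0 with h0 | h0 | h0
  · have hb : bFun x = 1 - 3 * x ^ 2 - 2 * x ^ 3 := bFun_eq1 x ⟨h.le, h0.le⟩
    rw [hb]
    exact deriv_of_eqOn ⟨h, h0⟩ (fun y hy => bI_eq1 y ⟨hy.1.le, hy.2.le⟩) (hd_q1 x)
  · subst h0
    have hb : bFun 0 = 1 := by unfold bFun; norm_num
    rw [hb]
    refine glue_deriv (by norm_num : (-1:ℝ) < 0) (by norm_num : (0:ℝ) < 1) bI_eq1 bI_eq2 ?_ ?_
    · have := hd_q1 0; convert this using 1; norm_num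
    · have := hd_q2 0; convert this using 1; norm_num
  rcases lt_trichotomy x 1 with h1 | h1 | h1
  · have hb : bFun x = 1 - 3 * x ^ 2 + 2 * x ^ 3 := bFun_eq2 x ⟨h0.le, h1.le⟩
    rw [hb]
    exact deriv_of_eqOn ⟨h0, h1⟩ (fun y hy => bI_eq2 y ⟨hy.1.le, hy.2.le⟩) (hd_q2 x)
  · subst h1
    have hb : bFun 1 = 0 := bFun_zero (by norm_num)
    rw [hb]
    refine glue_deriv (by norm_num : (0:ℝ) < 1) (by norm_num : (1:ℝ) < 2) bI_eq2
      (fun y hy => ?_) ?_ (hasDerivAt_const _ 1)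
    · unfold bI
      rcases eq_or_lt_of_le hy.1 with h | h
      · rw [if_neg (by linarith), if_neg (by linarith), if_pos (by linarith)]; rw [← h]; norm_num
      · rw [if_neg (by linarith), if_neg (by linarith), if_neg (by linarith)]
    · have := hd_q2 1; convert this using 1; norm_num
  · have hb : bFun x = 0 := bFun_zero (le_abs.mpr (Or.inl h1.le))
    rw [hb]
    exact deriv_of_eqOn (a := 1) (b := x + 1) ⟨h1, by linarith⟩
      (fun y hy => by
        unfold bI
        rw [if_neg (by linarith [hy.1]), if_neg (by linarith [hy.1]), if_neg (by push_neg; exact hy.1)])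
      (hasDerivAt_const _ 1)

lemma integral_bFun : ∫ x in (-1:ℝ)..1, bFun x = 1 := by
  have h := intervalIntegral.integral_eq_sub_of_hasDerivAt
    (f := bI) (f' := bFun) (a := (-1:ℝ)) (b := 1)
    (fun x _ => hasDerivAt_bI x) (bFun_cont.intervalIntegrable _ _)
  rw [h]
  have h1 : bI 1 = 1 := by unfold bI; norm_num
  have h2 : bI (-1) = 0 := by unfold bI; norm_num
  rw [h1, h2]; norm_num

lemma integral_bFun_of {a b : ℝ} (ha : a ≤ -1) (hb : 1 ≤ b) : ∫ x in a..b, bFun x = 1 := by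
  have i1 : ∫ x in a..(-1:ℝ), bFun x = 0 := by
    rw [← intervalIntegral.integral_zero (a := a) (b := (-1:ℝ)) (μ := MeasureTheory.volume)]
    apply intervalIntegral.integral_congr
    intro y hy
    rw [uIcc_of_le ha] at hy
    exact bFun_zero (le_abs.mpr (Or.inr (by linarith [hy.2])))
  have i3 : ∫ x in (1:ℝ)..b, bFun x = 0 := by
    rw [← intervalIntegral.integral_zero (a := (1:ℝ)) (b := b) (μ := MeasureTheory.volume)]
    apply intervalIntegral.integral_congr
    intro y hy
    rw [uIcc_of_le hb] at hy
    exact bFun_zero (le_abs.mpr (Or.inl hy.1))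
  have k1 := intervalIntegral.integral_add_adjacent_intervals
    (bFun_cont.intervalIntegrable a (-1)) (bFun_cont.intervalIntegrable (-1) 1)
    (μ := MeasureTheory.volume)
  have k2 := intervalIntegral.integral_add_adjacent_intervals
    (bFun_cont.intervalIntegrable a 1) (bFun_cont.intervalIntegrable 1 b)
    (μ := MeasureTheory.volume)
  rw [← k2, ← k1, i1, i3, integral_bFun]; ring

lemma biSup_le_of {s : Set ℝ} {g : ℝ → ℝ} {a : ℝ} (ha : 0 ≤ a) (h : ∀ y ∈ s, g y ≤ a) :
    (⨆ y ∈ s, g y) ≤ a :=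
  Real.iSup_le (fun y => Real.iSup_le (fun hy => h y hy) ha) ha

lemma biSup_nonneg {s : Set ℝ} {g : ℝ → ℝ} (h : ∀ y, 0 ≤ g y) : 0 ≤ ⨆ y ∈ s, g y :=
  Real.iSup_nonneg fun y => Real.iSup_nonneg fun _ => h y

lemma le_biSup_of {s : Set ℝ} {g : ℝ → ℝ} {C : ℝ} (hC : ∀ y ∈ s, g y ≤ C)
    {y : ℝ} (hy : y ∈ s) : g y ≤ ⨆ y ∈ s, g y := by
  have hC0 : ∀ z, (⨆ _ : z ∈ s, g z) ≤ max C 0 := by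
    intro z
    exact Real.iSup_le (fun hz => le_max_of_le_left (hC z hz)) (le_max_right _ _)
  have h1 : g y ≤ ⨆ _ : y ∈ s, g y :=
    le_ciSup (f := fun _ : y ∈ s => g y) ⟨g y, by rintro z ⟨hz, rfl⟩; rfl⟩ hy
  exact h1.trans (le_ciSup (f := fun z => ⨆ _ : z ∈ s, g z) ⟨max C 0, by rintro z ⟨w, rfl⟩; exact hC0 w⟩ y)

lemma sumCollapseTwo {n k : ℕ} (hk : k + 1 ≤ n) (F : ℕ → ℝ)
    (h0 : ∀ i ∈ Finset.range (n + 1), i ≠ k → i ≠ k + 1 → F i = 0) :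
    ∑ i ∈ Finset.range (n + 1), F i = F k + F (k + 1) := by
  have hsub : ({k, k + 1} : Finset ℕ) ⊆ Finset.range (n + 1) := by
    intro i hi
    simp only [Finset.mem_insert, Finset.mem_singleton] at hi
    rcases hi with rfl | rfl <;> simp [Finset.mem_range] <;> omega
  rw [← Finset.sum_subset hsub (fun i hi hni => h0 i hi
      (fun h => hni (by simp [h])) (fun h => hni (by simp [h])))]
  rw [Finset.sum_pair (by omega : k ≠ k + 1)]

lemma collapse_at (m : ℕ) (hm : 1 ≤ m) (x : ℝ) (hx : x ∈ Icc (0:ℝ) 1) :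
    ∃ k : ℕ, k + 1 ≤ m ∧ (k : ℝ) ≤ m * x ∧ m * x ≤ k + 1 ∧
      (∀ i ∈ Finset.range (m + 1), i ≠ k → i ≠ k + 1 → (1:ℝ) ≤ |m * x - i|) ∧
      (∀ j ∈ Finset.range m, j ≠ k → (1:ℝ) ≤ |2 * m * x - (2 * j + 1)|) := by
  have hm0 : (0:ℝ) < m := by positivity
  have hu0 : (0:ℝ) ≤ m * x := mul_nonneg hm0.le hx.1
  have hum : m * x ≤ m := by nlinarith [hx.2]
  set k : ℕ := min ⌊m * x⌋₊ (m - 1) with hkdef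
  have hk1 : k + 1 ≤ m := by omega
  have hkle : (k : ℝ) ≤ m * x := by
    rcases le_or_gt ⌊m * x⌋₊ (m - 1) with h | h
    · have : k = ⌊m * x⌋₊ := by omega
      rw [this]; exact Nat.floor_le hu0
    · have hk : k = m - 1 := by omega
      have : (m : ℝ) ≤ m * x := by
        have := (Nat.le_floor_iff hu0).mp (by omega : m ≤ ⌊m * x⌋₊)
        exact_mod_cast this
      rw [hk]
      have : ((m - 1 : ℕ) : ℝ) = (m : ℝ) - 1 := by
        rw [Nat.cast_sub hm]; norm_num
      rw [this]; linarith
  have hkge : m * x ≤ (k : ℝ) + 1 := by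
    rcases le_or_gt ⌊m * x⌋₊ (m - 1) with h | h
    · have hkf : k = ⌊m * x⌋₊ := by omega
      rw [hkf]
      exact_mod_cast (Nat.lt_floor_add_one (m * x)).le
    · have hk : k = m - 1 := by omega
      rw [hk]
      have : ((m - 1 : ℕ) : ℝ) = (m : ℝ) - 1 := by
        rw [Nat.cast_sub hm]; norm_num
      rw [this]; linarith
  refine ⟨k, hk1, hkle, hkge, ?_, ?_⟩
  · intro i _ hik hik1
    rcases lt_or_gt_of_ne hik with h | h
    · have : (i : ℝ) ≤ (k : ℝ) - 1 := by
        have : i + 1 ≤ k := h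
        have := Nat.cast_le (α := ℝ).mpr this
        push_cast at this ⊢; linarith
      rw [abs_of_nonneg (by linarith)]
      linarith
    · have : (k : ℝ) + 2 ≤ (i : ℝ) := by
        have : k + 2 ≤ i := by omega
        exact_mod_cast this
      rw [abs_of_nonpos (by linarith)]
      linarith
  · intro j _ hjk
    rcases lt_or_gt_of_ne hjk with h | h
    · have : (j : ℝ) ≤ (k : ℝ) - 1 := by
        have : j + 1 ≤ k := h
        have := Nat.cast_le (α := ℝ).mpr this
        push_cast at this ⊢; linarith
      rw [abs_of_nonneg (by linarith)]
      linarith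
    · have : (k : ℝ) + 1 ≤ (j : ℝ) := by exact_mod_cast h
      rw [abs_of_nonpos (by linarith)]
      linarith


lemma interp_pt (m : ℕ) (hm1 : 1 ≤ m) (f : ℝ → ℝ) (Mf Md : ℝ)
    (hfle : ∀ y ∈ Icc (0:ℝ) 1, |f y| ≤ Mf)
    (hlip : ∀ a ∈ Icc (0:ℝ) 1, ∀ b ∈ Icc (0:ℝ) 1, |f b - f a| ≤ Md * |b - a|)
    (hMd0 : 0 ≤ Md)
    (x : ℝ) (hx : x ∈ Icc (0:ℝ) 1) :
    |∑ i ∈ Finset.range (m + 1), f (i / m) * bFun (m * x - i)| ≤ Mf ∧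
    |f x - ∑ i ∈ Finset.range (m + 1), f (i / m) * bFun (m * x - i)| ≤ Md / (2 * m) ∧
    |∑ i ∈ Finset.range (m + 1), f (i / m) * (bD (m * x - i) * m)| ≤ 3 / 2 * Md := by
  have hm0 : (0:ℝ) < m := by exact_mod_cast hm1
  obtain ⟨k, hk1, hkle, hkge, hz, _⟩ := collapse_at m hm1 x hx
  have ht0 : 0 ≤ (m:ℝ) * x - k := by linarith
  have ht1 : (m:ℝ) * x - k ≤ 1 := by linarith
  have hnode : ∀ i : ℕ, i ≤ m → ((i:ℝ) / m) ∈ Icc (0:ℝ) 1 := by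
    intro i hi
    constructor
    · positivity
    · rw [div_le_one hm0]; exact_mod_cast hi
  have hak : ((k:ℝ) / m) ∈ Icc (0:ℝ) 1 := hnode k (by omega)
  have hca : ((k + 1 : ℕ) : ℝ) = (k : ℝ) + 1 := by push_cast; ring
  have hak1 : (((k:ℝ) + 1) / m) ∈ Icc (0:ℝ) 1 := by
    rw [← hca]; exact hnode (k + 1) hk1
  have B1 := bFun_nonneg ((m:ℝ) * x - k)
  have B2 := bFun_nonneg ((m:ℝ) * x - k - 1)
  have hpair := bFun_pair ht0 ht1
  have F1 := hfle _ hak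
  have F2 := hfle _ hak1
  have hScoll : (∑ i ∈ Finset.range (m + 1), f (i / m) * bFun ((m:ℝ) * x - i))
      = f ((k:ℝ) / m) * bFun ((m:ℝ) * x - k)
        + f (((k:ℝ) + 1) / m) * bFun ((m:ℝ) * x - k - 1) := by
    rw [sumCollapseTwo hk1 _ (fun i hi h1 h2 => by
      rw [bFun_zero (hz i hi (fun h => h1 (by exact_mod_cast h)) fun h => h2 (by exact_mod_cast h)), mul_zero])]
    push_cast
    ring_nf
  have hDcoll : (∑ i ∈ Finset.range (m + 1), f (i / m) * (bD ((m:ℝ) * x - i) * m))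
      = f ((k:ℝ) / m) * (bD ((m:ℝ) * x - k) * m)
        + f (((k:ℝ) + 1) / m) * (bD ((m:ℝ) * x - k - 1) * m) := by
    rw [sumCollapseTwo hk1 _ (fun i hi h1 h2 => by
      rw [bD_zero (hz i hi (fun h => h1 (by exact_mod_cast h)) fun h => h2 (by exact_mod_cast h)), zero_mul, mul_zero])]
    push_cast
    ring_nf
  refine ⟨?_, ?_, ?_⟩
  · rw [hScoll]
    have habs : |f ((k:ℝ) / m) * bFun ((m:ℝ) * x - k)
        + f (((k:ℝ) + 1) / m) * bFun ((m:ℝ) * x - k - 1)|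
        ≤ |f ((k:ℝ) / m)| * bFun ((m:ℝ) * x - k)
          + |f (((k:ℝ) + 1) / m)| * bFun ((m:ℝ) * x - k - 1) := by
      calc _ ≤ |f ((k:ℝ) / m) * bFun ((m:ℝ) * x - k)|
            + |f (((k:ℝ) + 1) / m) * bFun ((m:ℝ) * x - k - 1)| := abs_add_le _ _
        _ = _ := by rw [abs_mul, abs_mul, abs_of_nonneg B1, abs_of_nonneg B2]
    have p1 := mul_le_mul_of_nonneg_right F1 B1
    have p2 := mul_le_mul_of_nonneg_right F2 B2
    have hsum : Mf * bFun ((m:ℝ) * x - k) + Mf * bFun ((m:ℝ) * x - k - 1) = Mf := by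
      rw [← mul_add, hpair, mul_one]
    linarith [habs]
  · rw [hScoll]
    have e : f x - (f ((k:ℝ) / m) * bFun ((m:ℝ) * x - k)
        + f (((k:ℝ) + 1) / m) * bFun ((m:ℝ) * x - k - 1))
        = (f x - f ((k:ℝ) / m)) * bFun ((m:ℝ) * x - k)
          + (f x - f (((k:ℝ) + 1) / m)) * bFun ((m:ℝ) * x - k - 1) := by
      linear_combination (-(f x)) * hpair
    rw [e]
    have hd1 : |f x - f ((k:ℝ) / m)| ≤ Md * (((m:ℝ) * x - k) / m) := by
      have h0 := hlip _ hak x hx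
      have he2 : x - (k:ℝ) / m = ((m:ℝ) * x - k) / m := by field_simp
      have he : |x - (k:ℝ) / m| = ((m:ℝ) * x - k) / m := by
        rw [he2, abs_of_nonneg (div_nonneg ht0 hm0.le)]
      rwa [he] at h0
    have hd2 : |f x - f (((k:ℝ) + 1) / m)| ≤ Md * ((1 - ((m:ℝ) * x - k)) / m) := by
      have h0 := hlip _ hak1 x hx
      have he2 : x - ((k:ℝ) + 1) / m = -((1 - ((m:ℝ) * x - k)) / m) := by
        field_simp; ring
      have he : |x - ((k:ℝ) + 1) / m| = (1 - ((m:ℝ) * x - k)) / m := by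
        rw [he2, abs_neg, abs_of_nonneg (div_nonneg (by linarith) hm0.le)]
      rwa [he] at h0
    have hpoly : bFun ((m:ℝ) * x - k) * ((m:ℝ) * x - k)
        + bFun ((m:ℝ) * x - k - 1) * (1 - ((m:ℝ) * x - k)) ≤ 1 / 2 := by
      have hb1e : bFun ((m:ℝ) * x - k)
          = 1 - 3 * ((m:ℝ) * x - k) ^ 2 + 2 * ((m:ℝ) * x - k) ^ 3 :=
        bFun_eq2 _ ⟨ht0, ht1⟩
      have hb2e : bFun ((m:ℝ) * x - k - 1) = 1 - bFun ((m:ℝ) * x - k) := by linarith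
      rw [hb2e, hb1e]
      nlinarith [sq_nonneg (2 * ((m:ℝ) * x - k) - 1),
        mul_nonneg ht0 (by linarith : (0:ℝ) ≤ 1 - ((m:ℝ) * x - k)),
        sq_nonneg ((m:ℝ) * x - k)]
    have habs : |(f x - f ((k:ℝ) / m)) * bFun ((m:ℝ) * x - k)
          + (f x - f (((k:ℝ) + 1) / m)) * bFun ((m:ℝ) * x - k - 1)|
        ≤ |f x - f ((k:ℝ) / m)| * bFun ((m:ℝ) * x - k)
          + |f x - f (((k:ℝ) + 1) / m)| * bFun ((m:ℝ) * x - k - 1) := by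
      calc _ ≤ |(f x - f ((k:ℝ) / m)) * bFun ((m:ℝ) * x - k)|
            + |(f x - f (((k:ℝ) + 1) / m)) * bFun ((m:ℝ) * x - k - 1)| := abs_add_le _ _
        _ = _ := by rw [abs_mul, abs_mul, abs_of_nonneg B1, abs_of_nonneg B2]
    have p1 := mul_le_mul_of_nonneg_right hd1 B1
    have p2 := mul_le_mul_of_nonneg_right hd2 B2
    have hMdm : 0 ≤ Md / m := by positivity
    have h2 := mul_le_mul_of_nonneg_left hpoly hMdm
    have e2 : Md / m * (bFun ((m:ℝ) * x - k) * ((m:ℝ) * x - k)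
        + bFun ((m:ℝ) * x - k - 1) * (1 - ((m:ℝ) * x - k)))
        = Md * (((m:ℝ) * x - k) / m) * bFun ((m:ℝ) * x - k)
        + Md * ((1 - ((m:ℝ) * x - k)) / m) * bFun ((m:ℝ) * x - k - 1) := by
      field_simp
    have e3 : Md / m * (1 / 2) = Md / (2 * m) := by ring
    rw [e2, e3] at h2
    linarith [habs]
  · rw [hDcoll]
    have hbd : bD ((m:ℝ) * x - k - 1) = -bD ((m:ℝ) * x - k) := by
      have h := bD_pair ht0 ht1
      linarith [h]
    rw [hbd]
    have e : f ((k:ℝ) / m) * (bD ((m:ℝ) * x - k) * m)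
        + f (((k:ℝ) + 1) / m) * (-bD ((m:ℝ) * x - k) * m)
        = (f ((k:ℝ) / m) - f (((k:ℝ) + 1) / m)) * bD ((m:ℝ) * x - k) * m := by ring
    rw [e, abs_mul, abs_mul, abs_of_nonneg hm0.le]
    have hdf : |f ((k:ℝ) / m) - f (((k:ℝ) + 1) / m)| ≤ Md * (1 / m) := by
      have h0 := hlip _ hak1 ((k:ℝ) / m) hak
      have he2 : (k:ℝ) / m - ((k:ℝ) + 1) / m = -(1 / m) := by field_simp; ring
      have he : |(k:ℝ) / m - ((k:ℝ) + 1) / m| = 1 / m := by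
        rw [he2, abs_neg, abs_of_nonneg (by positivity)]
      rwa [he] at h0
    have hbd_abs := bD_abs_le ((m:ℝ) * x - k)
    have hb0 : (0:ℝ) ≤ |bD ((m:ℝ) * x - k)| := abs_nonneg _
    have step := mul_le_mul_of_nonneg_right
      (mul_le_mul hdf hbd_abs hb0 (by positivity)) hm0.le
    have e2 : Md * (1 / (m:ℝ)) * (3 / 2) * m = 3 / 2 * Md := by field_simp
    rw [e2] at step
    exact step

lemma kappa_pt (m : ℕ) (hm1 : 1 ≤ m) (x : ℝ) (hx : x ∈ Icc (0:ℝ) 1) :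
    |2 * ∑ j ∈ Finset.range m, bFun (2 * m * x - (2 * j + 1))| ≤ 2 ∧
    |2 * ∑ j ∈ Finset.range m, bD (2 * m * x - (2 * j + 1)) * (2 * m)| ≤ 6 * m := by
  have hm0 : (0:ℝ) < m := by exact_mod_cast hm1
  obtain ⟨k, hk1, hkle, hkge, _, hzκ⟩ := collapse_at m hm1 x hx
  have hκcoll : (∑ j ∈ Finset.range m, bFun (2 * (m:ℝ) * x - (2 * j + 1)))
      = bFun (2 * (m:ℝ) * x - (2 * k + 1)) :=
    Finset.sum_eq_single_of_mem k (Finset.mem_range.mpr (by omega))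
      (fun j hj hne => bFun_zero (hzκ j hj fun h => hne (by exact_mod_cast h)))
  have hκDcoll : (∑ j ∈ Finset.range m, bD (2 * (m:ℝ) * x - (2 * j + 1)) * (2 * m))
      = bD (2 * (m:ℝ) * x - (2 * k + 1)) * (2 * m) :=
    Finset.sum_eq_single_of_mem k (Finset.mem_range.mpr (by omega))
      (fun j hj hne => by
        rw [bD_zero (hzκ j hj fun h => hne (by exact_mod_cast h)), zero_mul])
  constructor
  · rw [hκcoll, abs_mul]
    have h1 := bFun_le_one (2 * (m:ℝ) * x - (2 * k + 1))
    have h2 := bFun_nonneg (2 * (m:ℝ) * x - (2 * k + 1))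
    rw [abs_of_nonneg h2]
    have h3 : |(2:ℝ)| = 2 := by norm_num
    rw [h3]; linarith
  · rw [hκDcoll, abs_mul, abs_mul]
    have h1 := bD_abs_le (2 * (m:ℝ) * x - (2 * k + 1))
    have h2 : |(2:ℝ)| = 2 := by norm_num
    have h3 : |2 * (m:ℝ)| = 2 * m := abs_of_nonneg (by positivity)
    rw [h2, h3]
    nlinarith [abs_nonneg (bD (2 * (m:ℝ) * x - (2 * k + 1)))]


lemma integral_kappa (m : ℕ) (hm1 : 1 ≤ m) :
    (∫ x in (0:ℝ)..1, (2 * ∑ j ∈ Finset.range m, bFun (2 * m * x - (2 * j + 1)))) = 1 := by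
  have hm0 : (0:ℝ) < m := by exact_mod_cast hm1
  rw [intervalIntegral.integral_const_mul]
  have hswap : (∫ x in (0:ℝ)..1, ∑ j ∈ Finset.range m, bFun (2 * (m:ℝ) * x - (2 * j + 1)))
      = ∑ j ∈ Finset.range m, ∫ x in (0:ℝ)..1, bFun (2 * (m:ℝ) * x - (2 * j + 1)) :=
    intervalIntegral.integral_finset_sum
      (fun j _ => Continuous.intervalIntegrable (bFun_cont.comp (by continuity)) 0 1)
  rw [hswap]
  have each : ∀ j ∈ Finset.range m,
      (∫ x in (0:ℝ)..1, bFun (2 * (m:ℝ) * x - (2 * j + 1))) = (2 * (m:ℝ))⁻¹ := by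
    intro j hj
    have hjm : (j:ℝ) ≤ (m:ℝ) - 1 := by
      have : (j:ℝ) + 1 ≤ m := by exact_mod_cast Finset.mem_range.mp hj
      linarith
    have h2m : (2 * (m:ℝ)) ≠ 0 := by positivity
    rw [intervalIntegral.integral_comp_mul_sub bFun h2m (2 * j + 1)]
    rw [integral_bFun_of (by push_cast; nlinarith [Nat.cast_nonneg (α := ℝ) j])
      (by push_cast; nlinarith)]
    simp
  rw [Finset.sum_congr rfl each, Finset.sum_const, Finset.card_range, nsmul_eq_mul]
  field_simp

lemma hasDerivAt_interp (m : ℕ) (a : ℕ → ℝ) (x : ℝ) :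
    HasDerivAt (fun x => ∑ i ∈ Finset.range (m + 1), a i * bFun (m * x - i))
      (∑ i ∈ Finset.range (m + 1), a i * (bD (m * x - i) * m)) x := by
  refine HasDerivAt.fun_sum fun i _ => ?_
  have hin : HasDerivAt (fun x : ℝ => (m:ℝ) * x - i) ((m:ℝ)) x := by
    simpa using ((hasDerivAt_id x).const_mul (m:ℝ)).sub_const (i:ℝ)
  have hcomp := (hasDerivAt_bFun ((m:ℝ) * x - i)).comp x hin
  exact hcomp.const_mul (a i)

lemma hasDerivAt_kappa (m : ℕ) (x : ℝ) :
    HasDerivAt (fun x => 2 * ∑ j ∈ Finset.range m, bFun (2 * m * x - (2 * j + 1)))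
      (2 * ∑ j ∈ Finset.range m, bD (2 * m * x - (2 * j + 1)) * (2 * m)) x := by
  refine HasDerivAt.const_mul 2 (HasDerivAt.fun_sum fun j _ => ?_)
  have hin : HasDerivAt (fun x : ℝ => 2 * (m:ℝ) * x - (2 * j + 1)) (2 * (m:ℝ)) x := by
    simpa using ((hasDerivAt_id x).const_mul (2 * (m:ℝ))).sub_const (2 * (j:ℝ) + 1)
  exact (hasDerivAt_bFun (2 * (m:ℝ) * x - (2 * j + 1))).comp x hin

/-- properties of the integral-preserving projection
`Π_η f = Σ_i f(a_i) φ_i + (∫f - Σ_i f(a_i)∫φ_i)·κ`, where `κ = 2Σ_{j<m} φ̃_{2j+1}`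
is built from the partition of unity of mesh `1/(2m)` (so `κ(a_i)=0`, `∫κ=1`).
For `f ∈ C¹([0,1])` and `m > 2`:
(1) `‖Π_η f‖_∞ ≤ 5‖f‖_∞`; (2) `‖Π_η f‖_∞ ≤ ‖f‖_∞ + 2‖f'‖_∞/m`;
(3) `‖Π_η f‖_{C¹} ≤ (11/2)‖f‖_{C¹}`; (4) `‖Π_η f - f‖_∞ ≤ 3‖f'‖_∞/m`;
and `∫ Π_η f = ∫ f`. -/
theorem stmt12
    (m : ℕ) (hm : 2 < m)
    (φ : ℝ → ℝ)
    (hφ : ∀ x : ℝ, φ x =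
      if x < -1 then 0
      else if x ≤ 0 then 1 - 3 * x ^ 2 - 2 * x ^ 3
      else if x ≤ 1 then 1 - 3 * x ^ 2 + 2 * x ^ 3
      else 0)
    (κ : ℝ → ℝ)
    (hκ : ∀ x : ℝ, κ x = 2 * ∑ j ∈ Finset.range m, φ (2 * m * x - (2 * j + 1)))
    (P : (ℝ → ℝ) → ℝ → ℝ)
    (hP : ∀ f x, P f x =
      (∑ i ∈ Finset.range (m + 1), f (i / m) * φ (m * x - i))
        + ((∫ t in (0:ℝ)..1, f t)
            - ∑ i ∈ Finset.range (m + 1), f (i / m) * ∫ t in (0:ℝ)..1, φ (m * t - i))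
          * κ x) :
    ∀ f : ℝ → ℝ, ContDiff ℝ 1 f →
      (∀ x ∈ Icc (0:ℝ) 1, |P f x| ≤ 5 * ⨆ y ∈ Icc (0:ℝ) 1, |f y|) ∧
      (∀ x ∈ Icc (0:ℝ) 1, |P f x|
          ≤ (⨆ y ∈ Icc (0:ℝ) 1, |f y|)
            + 2 * (⨆ y ∈ Icc (0:ℝ) 1, |deriv f y|) / m) ∧
      ((⨆ x ∈ Icc (0:ℝ) 1, |P f x|) + (⨆ x ∈ Icc (0:ℝ) 1, |deriv (P f) x|)
          ≤ (11 / 2) *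
              ((⨆ y ∈ Icc (0:ℝ) 1, |f y|) + ⨆ y ∈ Icc (0:ℝ) 1, |deriv f y|)) ∧
      (∀ x ∈ Icc (0:ℝ) 1, |P f x - f x|
          ≤ 3 * (⨆ y ∈ Icc (0:ℝ) 1, |deriv f y|) / m) ∧
      (∫ t in (0:ℝ)..1, P f t) = ∫ t in (0:ℝ)..1, f t := by
  have hφb : φ = bFun := by
    funext x
    rw [hφ x, bFun]
  subst hφb
  intro f hf
  have hm1 : 1 ≤ m := by omega
  have hmr : (2:ℝ) < m := by exact_mod_cast hm
  have hm0 : (0:ℝ) < m := by linarith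
  have hfc : Continuous f := hf.continuous
  have hf'c : Continuous (deriv f) := hf.continuous_deriv le_rfl
  set Mf := ⨆ y ∈ Icc (0:ℝ) 1, |f y| with hMfdef
  set Md := ⨆ y ∈ Icc (0:ℝ) 1, |deriv f y| with hMddef
  have hMf0 : 0 ≤ Mf := biSup_nonneg (fun y => abs_nonneg _)
  have hMd0 : 0 ≤ Md := biSup_nonneg (fun y => abs_nonneg _)
  obtain ⟨Cf, hCf⟩ := isCompact_Icc.exists_bound_of_continuousOn
    (s := Icc (0:ℝ) 1) hfc.continuousOn
  obtain ⟨Cd, hCd⟩ := isCompact_Icc.exists_bound_of_continuousOn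
    (s := Icc (0:ℝ) 1) hf'c.continuousOn
  have hfle : ∀ y ∈ Icc (0:ℝ) 1, |f y| ≤ Mf := by
    intro y hy
    exact le_biSup_of (g := fun y => |f y|)
      (fun z hz => by simpa [Real.norm_eq_abs] using hCf z hz) hy
  have hdle : ∀ y ∈ Icc (0:ℝ) 1, |deriv f y| ≤ Md := by
    intro y hy
    exact le_biSup_of (g := fun y => |deriv f y|)
      (fun z hz => by simpa [Real.norm_eq_abs] using hCd z hz) hy
  have hlip : ∀ a ∈ Icc (0:ℝ) 1, ∀ b ∈ Icc (0:ℝ) 1, |f b - f a| ≤ Md * |b - a| := by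
    intro a ha b hb
    have hfd : ∀ y ∈ uIcc a b, DifferentiableAt ℝ f y := fun y _ => hf.differentiable one_ne_zero y
    have heq := intervalIntegral.integral_deriv_eq_sub hfd (hf'c.intervalIntegrable a b)
    rw [← heq]
    have hb1 : ∀ y ∈ uIoc a b, ‖deriv f y‖ ≤ Md := by
      intro y hy
      have h1 : y ∈ Icc (0:ℝ) 1 := uIcc_subset_Icc ha hb (uIoc_subset_uIcc hy)
      rw [Real.norm_eq_abs]; exact hdle y h1
    have := intervalIntegral.norm_integral_le_of_norm_le_const hb1
    simpa [Real.norm_eq_abs] using this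
  have hpt := fun x hx => interp_pt m hm1 f Mf Md hfle hlip hMd0 x hx
  have hkap := fun x hx => kappa_pt m hm1 x hx
  -- continuity of the interpolant
  have hSc : Continuous (fun x : ℝ => ∑ i ∈ Finset.range (m + 1), f (i / m) * bFun (m * x - i)) :=
    continuous_finset_sum _ fun i _ => continuous_const.mul (bFun_cont.comp ((continuous_const.mul continuous_id).sub continuous_const))
  have hκfun : κ = fun x => 2 * ∑ j ∈ Finset.range m, bFun (2 * m * x - (2 * j + 1)) :=
    funext hκ
  have hκc : Continuous κ := by
    rw [hκfun]
    exact continuous_const.mul (continuous_finset_sum _ fun j _ => bFun_cont.comp ((continuous_const.mul continuous_id).sub continuous_const))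
  -- the constant c
  set c := (∫ t in (0:ℝ)..1, f t)
      - ∑ i ∈ Finset.range (m + 1), f (i / m) * ∫ t in (0:ℝ)..1, bFun (m * t - i) with hcdef
  have hswap : (∫ t in (0:ℝ)..1, (∑ i ∈ Finset.range (m + 1), f (i / m) * bFun (m * t - i)))
      = ∑ i ∈ Finset.range (m + 1), f (i / m) * ∫ t in (0:ℝ)..1, bFun (m * t - i) := by
    have h1 : (∫ t in (0:ℝ)..1, (∑ i ∈ Finset.range (m + 1), f (i / m) * bFun (m * t - i)))
        = ∑ i ∈ Finset.range (m + 1), ∫ t in (0:ℝ)..1, f (i / m) * bFun (m * t - i) :=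
      intervalIntegral.integral_finset_sum
        (fun i _ => Continuous.intervalIntegrable
          (continuous_const.mul (bFun_cont.comp ((continuous_const.mul continuous_id).sub continuous_const))) 0 1)
    rw [h1]
    exact Finset.sum_congr rfl fun i _ => intervalIntegral.integral_const_mul _ _
  have hcint : c = ∫ t in (0:ℝ)..1,
      (f t - ∑ i ∈ Finset.range (m + 1), f (i / m) * bFun (m * t - i)) := by
    rw [intervalIntegral.integral_sub (hfc.intervalIntegrable 0 1) (hSc.intervalIntegrable 0 1),
      hswap, hcdef]
  have hIoc : ∀ y : ℝ, y ∈ uIoc (0:ℝ) 1 → y ∈ Icc (0:ℝ) 1 := by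
    intro y hy
    rw [uIoc_of_le (by norm_num : (0:ℝ) ≤ 1)] at hy
    exact ⟨hy.1.le, hy.2⟩
  have hc1 : |c| ≤ 2 * Mf := by
    rw [hcint, ← Real.norm_eq_abs]
    have := intervalIntegral.norm_integral_le_of_norm_le_const (C := 2 * Mf)
      (f := fun t => f t - ∑ i ∈ Finset.range (m + 1), f (i / m) * bFun (m * t - i))
      (a := 0) (b := 1) ?_
    · simpa using this
    · intro y hy
      have hyI := hIoc y hy
      rw [Real.norm_eq_abs]
      have h1 := hfle y hyI
      have h2 := (hpt y hyI).1
      calc |f y - ∑ i ∈ Finset.range (m + 1), f (i / m) * bFun (m * y - i)|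
          ≤ |f y| + |∑ i ∈ Finset.range (m + 1), f (i / m) * bFun (m * y - i)| := abs_sub _ _
        _ ≤ 2 * Mf := by linarith
  have hc2 : |c| ≤ Md / (2 * m) := by
    rw [hcint, ← Real.norm_eq_abs]
    have := intervalIntegral.norm_integral_le_of_norm_le_const (C := Md / (2 * m))
      (f := fun t => f t - ∑ i ∈ Finset.range (m + 1), f (i / m) * bFun (m * t - i))
      (a := 0) (b := 1) ?_
    · simpa using this
    · intro y hy
      have hyI := hIoc y hy
      rw [Real.norm_eq_abs]
      exact (hpt y hyI).2.1
  -- κ integral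
  have hκint : (∫ t in (0:ℝ)..1, κ t) = 1 := by
    simp only [hκ]
    exact integral_kappa m hm1
  -- derivative of P f
  have hPfun : P f = fun x => (∑ i ∈ Finset.range (m + 1), f (i / m) * bFun (m * x - i)) + c * κ x :=
    funext fun x => hP f x
  have hPd : ∀ x : ℝ, HasDerivAt (P f)
      ((∑ i ∈ Finset.range (m + 1), f (i / m) * (bD (m * x - i) * m))
        + c * (2 * ∑ j ∈ Finset.range m, bD (2 * m * x - (2 * j + 1)) * (2 * m))) x := by
    intro x
    have h1 := hasDerivAt_interp m (fun i => f (i / m)) x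
    have h2 : HasDerivAt κ (2 * ∑ j ∈ Finset.range m, bD (2 * m * x - (2 * j + 1)) * (2 * m)) x := by
      rw [hκfun]
      exact hasDerivAt_kappa m x
    have h3 := h1.add (h2.const_mul c)
    rw [hPfun]
    exact h3
  -- pointwise bound for P f
  have hPb : ∀ x ∈ Icc (0:ℝ) 1, |P f x| ≤ Mf + Md / m := by
    intro x hx
    rw [hP f x]
    obtain ⟨h1, _, _⟩ := hpt x hx
    obtain ⟨h4, _⟩ := hkap x hx
    have hκb : |κ x| ≤ 2 := by rw [hκ x]; exact h4
    have habs := abs_add_le (∑ i ∈ Finset.range (m + 1), f (i / m) * bFun (m * x - i)) (c * κ x)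
    rw [abs_mul] at habs
    have h5 : |c| * |κ x| ≤ (Md / (2 * m)) * 2 :=
      mul_le_mul hc2 hκb (abs_nonneg _) (by positivity)
    have e : (Md / (2 * m)) * 2 = Md / m := by ring
    rw [e] at h5
    linarith
  have hPb5 : ∀ x ∈ Icc (0:ℝ) 1, |P f x| ≤ 5 * Mf := by
    intro x hx
    rw [hP f x]
    obtain ⟨h1, _, _⟩ := hpt x hx
    obtain ⟨h4, _⟩ := hkap x hx
    have hκb : |κ x| ≤ 2 := by rw [hκ x]; exact h4
    have habs := abs_add_le (∑ i ∈ Finset.range (m + 1), f (i / m) * bFun (m * x - i)) (c * κ x)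
    rw [abs_mul] at habs
    have h5 : |c| * |κ x| ≤ (2 * Mf) * 2 :=
      mul_le_mul hc1 hκb (abs_nonneg _) (by positivity)
    linarith
  have hPdb : ∀ x ∈ Icc (0:ℝ) 1, |deriv (P f) x| ≤ 9 / 2 * Md := by
    intro x hx
    rw [(hPd x).deriv]
    obtain ⟨_, _, h3⟩ := hpt x hx
    obtain ⟨_, h5⟩ := hkap x hx
    have habs := abs_add_le (∑ i ∈ Finset.range (m + 1), f (i / m) * (bD (m * x - i) * m))
      (c * (2 * ∑ j ∈ Finset.range m, bD (2 * m * x - (2 * j + 1)) * (2 * m)))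
    rw [abs_mul] at habs
    have h6 : |c| * |2 * ∑ j ∈ Finset.range m, bD (2 * m * x - (2 * j + 1)) * (2 * m)|
        ≤ (Md / (2 * m)) * (6 * m) :=
      mul_le_mul hc2 h5 (abs_nonneg _) (by positivity)
    have e : (Md / (2 * m)) * (6 * m) = 3 * Md := by field_simp; ring
    rw [e] at h6
    linarith
  refine ⟨hPb5, ?_, ?_, ?_, ?_⟩
  · -- part 2
    intro x hx
    have := hPb x hx
    have hmd : Md / (m:ℝ) ≤ 2 * Md / m := by
      gcongr
      linarith
    linarith
  · -- part 3
    have hsup1 : (⨆ x ∈ Icc (0:ℝ) 1, |P f x|) ≤ Mf + Md / m :=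
      biSup_le_of (by positivity) hPb
    have hsup2 : (⨆ x ∈ Icc (0:ℝ) 1, |deriv (P f) x|) ≤ 9 / 2 * Md :=
      biSup_le_of (by positivity) hPdb
    have hmd : Md / (m:ℝ) ≤ Md / 2 := by
      apply div_le_div_of_nonneg_left hMd0 (by norm_num) hmr.le
    linarith
  · -- part 4
    intro x hx
    rw [hP f x]
    obtain ⟨_, h2, _⟩ := hpt x hx
    obtain ⟨h4, _⟩ := hkap x hx
    have hκb : |κ x| ≤ 2 := by rw [hκ x]; exact h4
    have e : (∑ i ∈ Finset.range (m + 1), f (i / m) * bFun (m * x - i)) + c * κ x - f x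
        = -(f x - ∑ i ∈ Finset.range (m + 1), f (i / m) * bFun (m * x - i)) + c * κ x := by ring
    rw [e]
    have habs := abs_add_le (-(f x - ∑ i ∈ Finset.range (m + 1), f (i / m) * bFun (m * x - i))) (c * κ x)
    rw [abs_neg, abs_mul] at habs
    have h5 : |c| * |κ x| ≤ (Md / (2 * m)) * 2 :=
      mul_le_mul hc2 hκb (abs_nonneg _) (by positivity)
    have e2 : (Md / (2 * m)) * 2 = Md / m := by ring
    rw [e2] at h5
    have e3 : Md / (2 * (m:ℝ)) + Md / m ≤ 3 * Md / m := by
      rw [div_add_div _ _ (by positivity : (2 * (m:ℝ)) ≠ 0) (by positivity : (m:ℝ) ≠ 0)]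
      rw [div_le_div_iff₀ (by positivity) (by positivity)]
      ring_nf
      nlinarith
    linarith
  · -- integral preservation
    have hPint : (∫ t in (0:ℝ)..1, P f t)
        = (∫ t in (0:ℝ)..1, (∑ i ∈ Finset.range (m + 1), f (i / m) * bFun (m * t - i)))
          + c * ∫ t in (0:ℝ)..1, κ t := by
      rw [hPfun]
      rw [intervalIntegral.integral_add (hSc.intervalIntegrable 0 1)
        ((continuous_const.mul hκc).intervalIntegrable 0 1) (g := fun x => c * κ x)]
      rw [intervalIntegral.integral_const_mul]
    rw [hPint, hκint, hswap, hcdef]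
    ring
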